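/- Let I be a nonzero ideal of R = Z[x_1,…,x_l] and σ a term ordering on R. Then the set of prime numbers that are not σ-lucky for I is finite. -/

import Mathlib

namespace HApaper

/-- A term ordering on the monomials of `ℤ[x_1,…,x_l]`: a linear order on the
exponent vectors which has `1` as least monomial and is compatible with
multiplication of monomials. -/
structure TermOrder (l : ℕ) where
  lin : LinearOrder (Fin l →₀ ℕ)
  zero_le : ∀ m, lin.le 0 m
  add_le_add_right : ∀ a b c, lin.le a b → lin.le (a + c) (b + c)

/-- The leading monomial `LM_σ(f)` of a polynomial (junk value `0` for `f = 0`). -/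
noncomputable def TermOrder.lm {l : ℕ} (σ : TermOrder l) (f : MvPolynomial (Fin l) ℤ) :
    Fin l →₀ ℕ :=
  letI := σ.lin
  f.support.max.unbotD 0

/-- The leading coefficient `LC_σ(f)`. -/
noncomputable def TermOrder.lc {l : ℕ} (σ : TermOrder l) (f : MvPolynomial (Fin l) ℤ) : ℤ :=
  MvPolynomial.coeff (σ.lm f) f

/-- The leading term `LT_σ(f) = LC_σ(f)·x^{LM_σ(f)}`, as an element of `ℤ[x_1,…,x_l]`. -/
noncomputable def TermOrder.lt {l : ℕ} (σ : TermOrder l) (f : MvPolynomial (Fin l) ℤ) :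
    MvPolynomial (Fin l) ℤ :=
  MvPolynomial.monomial (σ.lm f) (σ.lc f)

/-- `G` is a minimal strong `σ`-Gröbner basis of `I` if: its elements are nonzero,
it generates `I`, the leading term of every nonzero element of `I` is divisible by the
leading term of some element of `G`, and no leading term of an element of `G` divides
the leading term of another element of `G`. -/
def IsMinimalStrongGroebnerBasis {l : ℕ} (σ : TermOrder l)
    (I : Ideal (MvPolynomial (Fin l) ℤ)) (G : Finset (MvPolynomial (Fin l) ℤ)) : Prop :=
  (∀ g ∈ G, g ≠ 0) ∧
  Ideal.span (G : Set (MvPolynomial (Fin l) ℤ)) = I ∧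
  (∀ f ∈ I, f ≠ 0 → ∃ g ∈ G, σ.lt g ∣ σ.lt f) ∧
  (∀ g ∈ G, ∀ g' ∈ G, g ≠ g' → ¬ σ.lt g ∣ σ.lt g')

/-- A prime `p` is `σ`-lucky for `I` if it divides no leading coefficient of a
minimal strong `σ`-Gröbner basis of `I`. -/
def IsLuckyPrime {l : ℕ} (σ : TermOrder l) (I : Ideal (MvPolynomial (Fin l) ℤ))
    (p : ℕ) : Prop :=
  ∃ G : Finset (MvPolynomial (Fin l) ℤ), IsMinimalStrongGroebnerBasis σ I G ∧
    ∀ g ∈ G, ¬ ((p : ℤ) ∣ σ.lc g)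

variable {l : ℕ} (σ : TermOrder l)

open MvPolynomial

lemma lm_spec {f : MvPolynomial (Fin l) ℤ} (hf : f ≠ 0) :
    σ.lm f ∈ f.support ∧ ∀ m ∈ f.support, σ.lin.le m (σ.lm f) := by
  letI := σ.lin
  have hs : f.support.Nonempty := by
    rw [Finset.nonempty_iff_ne_empty, Ne, MvPolynomial.support_eq_empty]; exact hf
  obtain ⟨a, ha⟩ := Finset.max_of_nonempty hs
  have hlm : σ.lm f = a := by rw [TermOrder.lm, ha, WithBot.unbotD_coe]
  constructor
  · rw [hlm]; exact Finset.mem_of_max ha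
  · intro m hm
    have := Finset.le_max hm
    rw [ha] at this
    rw [hlm]
    exact (@WithBot.coe_le_coe (Fin l →₀ ℕ) m a σ.lin.toPartialOrder.toPreorder.toLE).mp this

lemma lc_ne_zero {f : MvPolynomial (Fin l) ℤ} (hf : f ≠ 0) : σ.lc f ≠ 0 := by
  have h := (lm_spec σ hf).1
  rwa [MvPolynomial.mem_support_iff] at h

lemma lm_eq {f : MvPolynomial (Fin l) ℤ} {n : Fin l →₀ ℕ} (hc : coeff n f ≠ 0)
    (h : ∀ m ∈ f.support, σ.lin.le m n) : σ.lm f = n := by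
  have hf : f ≠ 0 := fun h0 => hc (by simp [h0])
  have h1 := (lm_spec σ hf).1
  have h2 := (lm_spec σ hf).2
  exact σ.lin.le_antisymm _ _ (h _ h1) (h2 n (MvPolynomial.mem_support_iff.mpr hc))

lemma sle_of_le {a b : Fin l →₀ ℕ} (h : a ≤ b) : σ.lin.le a b := by
  have h3 := σ.add_le_add_right 0 (b - a) a (σ.zero_le _)
  rwa [zero_add, tsub_add_cancel_of_le h] at h3

lemma swf : WellFounded (fun a b => σ.lin.lt a b) := by
  rw [RelEmbedding.wellFounded_iff_isEmpty]
  constructor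
  intro e
  obtain ⟨m, n, hmn, hle⟩ := (Set.isPWO_of_wellQuasiOrderedLE (Set.univ : Set (Fin l →₀ ℕ))).exists_lt
    (f := fun k => e k) (fun _ => Set.mem_univ _)
  have hlt : σ.lin.lt (e n) (e m) := e.map_rel_iff.mpr hmn
  exact ((σ.lin.lt_iff_le_not_ge _ _).mp hlt).2 (sle_of_le σ hle)


lemma lm_lc_monomial_mul {e : Fin l →₀ ℕ} {c : ℤ} {g : MvPolynomial (Fin l) ℤ}
    (hc : c ≠ 0) (hg : g ≠ 0) :
    σ.lm (monomial e c * g) = e + σ.lm g ∧ σ.lc (monomial e c * g) = c * σ.lc g := by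
  have hco : coeff (e + σ.lm g) (monomial e c * g) = c * σ.lc g := coeff_monomial_mul _ _ _ _
  have hne : coeff (e + σ.lm g) (monomial e c * g) ≠ 0 := by
    rw [hco]; exact mul_ne_zero hc (lc_ne_zero σ hg)
  have hlm : σ.lm (monomial e c * g) = e + σ.lm g := by
    refine lm_eq σ hne ?_
    intro m hm
    rw [MvPolynomial.mem_support_iff, coeff_monomial_mul'] at hm
    by_cases hle : e ≤ m
    · have hm' : coeff (m - e) g ≠ 0 := by
        intro h0; rw [if_pos hle, h0, mul_zero] at hm; exact hm rfl
      have h1 : σ.lin.le (m - e) (σ.lm g) :=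
        (lm_spec σ hg).2 _ (MvPolynomial.mem_support_iff.mpr hm')
      have h2 := σ.add_le_add_right _ _ e h1
      rw [tsub_add_cancel_of_le hle] at h2
      rwa [add_comm e (σ.lm g)]
    · rw [if_neg hle] at hm; exact absurd rfl hm
  refine ⟨hlm, ?_⟩
  rw [TermOrder.lc, hlm, hco]

lemma lm_lc_smul {k : ℤ} {f : MvPolynomial (Fin l) ℤ} (hk : k ≠ 0) (hf : f ≠ 0) :
    σ.lm (k • f) = σ.lm f ∧ σ.lc (k • f) = k * σ.lc f := by
  have hco : ∀ m, coeff m (k • f) = k * coeff m f := fun m => by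
    rw [MvPolynomial.coeff_smul, smul_eq_mul]
  have hne : coeff (σ.lm f) (k • f) ≠ 0 := by
    rw [hco]; exact mul_ne_zero hk (lc_ne_zero σ hf)
  have hlm : σ.lm (k • f) = σ.lm f := by
    refine lm_eq σ hne ?_
    intro m hm
    rw [MvPolynomial.mem_support_iff, hco] at hm
    exact (lm_spec σ hf).2 _ (MvPolynomial.mem_support_iff.mpr
      fun h0 => hm (by rw [h0, mul_zero]))
  exact ⟨hlm, by rw [TermOrder.lc, hlm, hco]; rfl⟩

lemma lm_sub_lt {f h : MvPolynomial (Fin l) ℤ} (hf : f ≠ 0) (hh : h ≠ 0)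
    (hlm : σ.lm h = σ.lm f) (hlc : σ.lc h = σ.lc f) (hne : f - h ≠ 0) :
    σ.lin.lt (σ.lm (f - h)) (σ.lm f) := by
  have hmem := (lm_spec σ hne).1
  rw [MvPolynomial.mem_support_iff] at hmem
  have hcf : coeff (σ.lm (f - h)) (f - h) ≠ 0 := hmem
  have hnelm : σ.lm (f - h) ≠ σ.lm f := by
    intro heq
    apply hcf
    rw [heq, MvPolynomial.coeff_sub]
    have : coeff (σ.lm f) h = σ.lc f := by rw [← hlc, TermOrder.lc, hlm]
    rw [this, TermOrder.lc, sub_self]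
  have hle : σ.lin.le (σ.lm (f - h)) (σ.lm f) := by
    rw [MvPolynomial.coeff_sub] at hcf
    rcases ne_or_eq (coeff (σ.lm (f - h)) f) 0 with hc | hc
    · exact (lm_spec σ hf).2 _ (MvPolynomial.mem_support_iff.mpr hc)
    · have hc' : coeff (σ.lm (f - h)) h ≠ 0 := by
        intro h0; rw [hc, h0, sub_zero] at hcf; exact hcf rfl
      have := (lm_spec σ hh).2 _ (MvPolynomial.mem_support_iff.mpr hc')
      rwa [hlm] at this
  exact (σ.lin.lt_iff_le_not_ge _ _).mpr
    ⟨hle, fun hge => hnelm (σ.lin.le_antisymm _ _ hle hge)⟩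


/-- The ideal of leading coefficients of elements of `I` with leading monomial `n`. -/
def lcIdeal (I : Ideal (MvPolynomial (Fin l) ℤ)) (n : Fin l →₀ ℕ) : Ideal ℤ where
  carrier := {c | c = 0 ∨ ∃ f ∈ I, f ≠ 0 ∧ σ.lm f = n ∧ σ.lc f = c}
  zero_mem' := Or.inl rfl
  add_mem' := by
    rintro a b (rfl | ⟨f, hfI, hf0, hflm, hflc⟩) hb
    · simpa using hb
    rcases hb with rfl | ⟨g, hgI, hg0, hglm, hglc⟩
    · simpa using Or.inr ⟨f, hfI, hf0, hflm, hflc⟩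
    by_cases hab : a + b = 0
    · exact Or.inl hab
    refine Or.inr ⟨f + g, I.add_mem hfI hgI, ?_, ?_, ?_⟩
    all_goals
      have hcf : MvPolynomial.coeff n f = a := by rw [← hflc, TermOrder.lc, hflm]
      have hcg : MvPolynomial.coeff n g = b := by rw [← hglc, TermOrder.lc, hglm]
      have hcoeff : MvPolynomial.coeff n (f + g) = a + b := by
        rw [MvPolynomial.coeff_add, hcf, hcg]
      have hlm : σ.lm (f + g) = n := by
        refine lm_eq σ (by rw [hcoeff]; exact hab) ?_
        intro m hm
        rcases Finset.mem_union.mp (MvPolynomial.support_add hm) with h | h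
        · have := (lm_spec σ hf0).2 m h; rwa [hflm] at this
        · have := (lm_spec σ hg0).2 m h; rwa [hglm] at this
      first
      | exact fun h0 => hab (by rw [← hcoeff, h0, MvPolynomial.coeff_zero])
      | exact hlm
      | rw [TermOrder.lc, hlm, hcoeff]
  smul_mem' := by
    rintro k a (rfl | ⟨f, hfI, hf0, hflm, hflc⟩)
    · exact Or.inl (by simp)
    by_cases hk : k = 0
    · exact Or.inl (by simp [hk])
    refine Or.inr ⟨k • f, ?_, ?_, ?_, ?_⟩
    · rw [MvPolynomial.smul_eq_C_mul]; exact I.mul_mem_left _ hfI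
    · exact fun h0 => lc_ne_zero σ hf0 (by
        have := (lm_lc_smul σ hk hf0).2
        rw [h0] at this
        simpa using (mul_eq_zero.mp this.symm).resolve_left hk)
    · rw [(lm_lc_smul σ hk hf0).1, hflm]
    · rw [(lm_lc_smul σ hk hf0).2, hflc, smul_eq_mul]

lemma mem_lcIdeal_iff {I : Ideal (MvPolynomial (Fin l) ℤ)} {n : Fin l →₀ ℕ} {c : ℤ} :
    c ∈ lcIdeal σ I n ↔ c = 0 ∨ ∃ f ∈ I, f ≠ 0 ∧ σ.lm f = n ∧ σ.lc f = c := Iff.rfl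

lemma lc_mem_lcIdeal {I : Ideal (MvPolynomial (Fin l) ℤ)} {f : MvPolynomial (Fin l) ℤ}
    (hfI : f ∈ I) (hf0 : f ≠ 0) : σ.lc f ∈ lcIdeal σ I (σ.lm f) :=
  Or.inr ⟨f, hfI, hf0, rfl, rfl⟩

lemma lcIdeal_mono {I : Ideal (MvPolynomial (Fin l) ℤ)} {n n' : Fin l →₀ ℕ} (h : n' ≤ n) :
    lcIdeal σ I n' ≤ lcIdeal σ I n := by
  rintro c (rfl | ⟨f, hfI, hf0, hflm, hflc⟩)
  · exact Or.inl rfl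
  have h1 : (1 : ℤ) ≠ 0 := one_ne_zero
  have hmul := lm_lc_monomial_mul σ (e := n - n') h1 hf0
  refine Or.inr ⟨MvPolynomial.monomial (n - n') 1 * f, I.mul_mem_left _ hfI, ?_, ?_, ?_⟩
  · exact fun h0 => lc_ne_zero σ hf0 (by
      have := hmul.2; rw [h0] at this; simpa [TermOrder.lc] using this.symm)
  · rw [hmul.1, hflm, tsub_add_cancel_of_le h]
  · rw [hmul.2, hflc, one_mul]

/-- generator of `lcIdeal`. -/
noncomputable def gen (I : Ideal (MvPolynomial (Fin l) ℤ)) (n : Fin l →₀ ℕ) : ℤ :=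
  @Submodule.IsPrincipal.generator ℤ ℤ _ _ _ (lcIdeal σ I n) (IsPrincipalIdealRing.principal _)

lemma gen_mem (I : Ideal (MvPolynomial (Fin l) ℤ)) (n : Fin l →₀ ℕ) :
    gen σ I n ∈ lcIdeal σ I n := by
  haveI := IsPrincipalIdealRing.principal (lcIdeal σ I n)
  exact Submodule.IsPrincipal.generator_mem _

lemma gen_dvd {I : Ideal (MvPolynomial (Fin l) ℤ)} {n : Fin l →₀ ℕ} {c : ℤ}
    (hc : c ∈ lcIdeal σ I n) : gen σ I n ∣ c := by
  haveI := IsPrincipalIdealRing.principal (lcIdeal σ I n)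
  rw [← Ideal.span_singleton_generator (lcIdeal σ I n)] at hc
  obtain ⟨a, ha⟩ := Ideal.mem_span_singleton'.mp hc
  exact ⟨a, by rw [← ha, mul_comm]; rfl⟩

lemma gen_ne_zero {I : Ideal (MvPolynomial (Fin l) ℤ)} {n : Fin l →₀ ℕ}
    (h : lcIdeal σ I n ≠ ⊥) : gen σ I n ≠ 0 := by
  haveI := IsPrincipalIdealRing.principal (lcIdeal σ I n)
  intro h0
  exact h ((Submodule.IsPrincipal.eq_bot_iff_generator_eq_zero _).mpr h0)

lemma exists_gen_poly {I : Ideal (MvPolynomial (Fin l) ℤ)} {n : Fin l →₀ ℕ}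
    (h : lcIdeal σ I n ≠ ⊥) :
    ∃ f, f ∈ I ∧ f ≠ 0 ∧ σ.lm f = n ∧ σ.lc f = gen σ I n := by
  rcases gen_mem σ I n with h0 | ⟨f, hfI, hf0, hflm, hflc⟩
  · exact absurd h0 (gen_ne_zero σ h)
  · exact ⟨f, hfI, hf0, hflm, hflc⟩

/-- number of prime factors with multiplicity -/
def Om (c : ℤ) : ℕ := c.natAbs.primeFactorsList.length

lemma dvd_of_dvd_of_Om_le {a b : ℤ} (hab : a ∣ b) (hb : b ≠ 0) (hOm : Om b ≤ Om a) :
    b ∣ a := by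
  obtain ⟨t, rfl⟩ := hab
  have ha : a ≠ 0 := fun h => hb (by rw [h, zero_mul])
  have ht : t ≠ 0 := fun h => hb (by rw [h, mul_zero])
  have hA : a.natAbs ≠ 0 := Int.natAbs_ne_zero.mpr ha
  have hT : t.natAbs ≠ 0 := Int.natAbs_ne_zero.mpr ht
  have hmul : Om (a * t) = Om a + Om t := by
    rw [Om, Int.natAbs_mul]
    rw [(Nat.perm_primeFactorsList_mul hA hT).length_eq, List.length_append]
    rfl
  have hOmT : Om t = 0 := by omega
  have : t.natAbs = 1 := by
    rcases (Nat.primeFactorsList_eq_nil _).mp (List.length_eq_zero_iff.mp hOmT) with h | h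
    · exact absurd h hT
    · exact h
  rcases Int.natAbs_eq_iff.mp this with h1 | h1
  · rw [h1]; simp
  · refine ⟨-1, ?_⟩
    rw [h1]; push_cast; ring

/-- In a PWO set, the minimal elements form a finite covering antichain. -/
lemma exists_min_cover {α : Type*} [PartialOrder α] {S : Set α} (h : S.IsPWO) :
    ∃ B ⊆ S, B.Finite ∧ (∀ x ∈ S, ∃ b ∈ B, b ≤ x) ∧ (∀ b ∈ B, ∀ y ∈ S, y ≤ b → y = b) := by
  refine ⟨{x ∈ S | ∀ y ∈ S, y ≤ x → y = x}, Set.sep_subset _ _, ?_, ?_, fun b hb => hb.2⟩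
  · refine IsAntichain.finite_of_partiallyWellOrderedOn (r := (· ≤ ·)) ?_
      (h.mono (Set.sep_subset _ _))
    intro a ha b hb hne hle
    exact hne (hb.2 a ha.1 hle)
  · intro x hx
    have hT : (S ∩ {y | y ≤ x}).IsWF := h.isWF.mono Set.inter_subset_left
    have hTne : (S ∩ {y | y ≤ x}).Nonempty := ⟨x, hx, le_refl x⟩
    refine ⟨hT.min hTne, ⟨(hT.min_mem hTne).1, ?_⟩, (hT.min_mem hTne).2⟩
    intro y hy hyle
    by_contra hne
    exact hT.not_lt_min hTne ⟨hy, le_trans hyle (hT.min_mem hTne).2⟩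
      (lt_of_le_of_ne hyle hne)



theorem exists_msgb (I : Ideal (MvPolynomial (Fin l) ℤ)) :
    ∃ G, IsMinimalStrongGroebnerBasis σ I G := by
  classical
  set M : Set (Fin l →₀ ℕ) := {n | lcIdeal σ I n ≠ ⊥} with hM
  set φ : (Fin l →₀ ℕ) → (Fin l →₀ ℕ) × ℕ := fun n => (n, Om (gen σ I n)) with hφ
  have hSpwo : (φ '' M).IsPWO := by
    have h1 : (Set.univ : Set (Fin l →₀ ℕ)).IsPWO := Set.isPWO_of_wellQuasiOrderedLE _
    have h2 : (Set.univ : Set ℕ).IsPWO := (Set.isWF_univ_iff.mpr ⟨wellFounded_lt⟩).isPWO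
    refine (h1.prod h2).mono ?_
    rw [Set.univ_prod_univ]
    exact Set.subset_univ _
  obtain ⟨B, hBS, hBfin, hcov, hmin⟩ := exists_min_cover hSpwo
  have hex : ∀ n ∈ M, ∃ f, f ∈ I ∧ f ≠ 0 ∧ σ.lm f = n ∧ σ.lc f = gen σ I n :=
    fun n hn => exists_gen_poly σ hn
  choose F hF using hex
  set F' : (Fin l →₀ ℕ) → MvPolynomial (Fin l) ℤ :=
    fun n => if h : n ∈ M then F n h else 0 with hF'
  have hF'spec : ∀ n (hn : n ∈ M),
      F' n ∈ I ∧ F' n ≠ 0 ∧ σ.lm (F' n) = n ∧ σ.lc (F' n) = gen σ I n := by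
    intro n hn
    rw [hF']
    simp only [dif_pos hn]
    exact hF n hn
  set G : Finset (MvPolynomial (Fin l) ℤ) := hBfin.toFinset.image (fun p => F' p.1) with hG
  -- membership in B gives everything
  have hBspec : ∀ b ∈ B, b.1 ∈ M ∧ b.2 = Om (gen σ I b.1) := by
    intro b hb
    obtain ⟨n, hnM, rfl⟩ := hBS hb
    exact ⟨hnM, rfl⟩
  have hGmem : ∀ g ∈ G, ∃ b ∈ B, g = F' b.1 := by
    intro g hg
    rw [hG, Finset.mem_image] at hg
    obtain ⟨b, hb, rfl⟩ := hg
    exact ⟨b, hBfin.mem_toFinset.mp hb, rfl⟩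
  have hGI : ∀ g ∈ G, g ∈ I ∧ g ≠ 0 := by
    intro g hg
    obtain ⟨b, hb, rfl⟩ := hGmem g hg
    obtain ⟨hbM, _⟩ := hBspec b hb
    exact ⟨(hF'spec _ hbM).1, (hF'spec _ hbM).2.1⟩
  -- covering
  have hcover : ∀ f ∈ I, f ≠ 0 → ∃ g ∈ G, σ.lt g ∣ σ.lt f := by
    intro f hfI hf0
    have hmemn : σ.lc f ∈ lcIdeal σ I (σ.lm f) := lc_mem_lcIdeal σ hfI hf0
    have hnM : σ.lm f ∈ M := by
      rw [hM, Set.mem_setOf_eq]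
      intro hbot
      rw [hbot, Submodule.mem_bot] at hmemn
      exact lc_ne_zero σ hf0 hmemn
    obtain ⟨b, hbB, hble⟩ := hcov (φ (σ.lm f)) ⟨σ.lm f, hnM, rfl⟩
    obtain ⟨n', hn'M, rfl⟩ := hBS hbB
    have hle1 : n' ≤ σ.lm f := hble.1
    have hle2 : Om (gen σ I n') ≤ Om (gen σ I (σ.lm f)) := hble.2
    have hdvd1 : gen σ I (σ.lm f) ∣ gen σ I n' :=
      gen_dvd σ (lcIdeal_mono σ hle1 (gen_mem σ I n'))
    have hdvd2 : gen σ I n' ∣ gen σ I (σ.lm f) :=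
      dvd_of_dvd_of_Om_le hdvd1 (gen_ne_zero σ hn'M) hle2
    refine ⟨F' n', ?_, ?_⟩
    · rw [hG, Finset.mem_image]
      exact ⟨(n', Om (gen σ I n')), hBfin.mem_toFinset.mpr hbB, rfl⟩
    · obtain ⟨_, _, hlm', hlc'⟩ := hF'spec n' hn'M
      rw [TermOrder.lt, TermOrder.lt, hlm', hlc']
      exact MvPolynomial.monomial_dvd_monomial.mpr
        ⟨Or.inr hle1, dvd_trans hdvd2 (gen_dvd σ hmemn)⟩
  have hspan_le : Ideal.span (G : Set (MvPolynomial (Fin l) ℤ)) ≤ I :=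
    Ideal.span_le.mpr (fun g hg => (hGI g hg).1)
  -- span
  have hspan : ∀ n f, f ∈ I → σ.lm f = n → f ∈ Ideal.span (G : Set (MvPolynomial (Fin l) ℤ)) := by
    intro n
    refine (swf σ).induction
      (C := fun n => ∀ f, f ∈ I → σ.lm f = n →
        f ∈ Ideal.span (G : Set (MvPolynomial (Fin l) ℤ))) n ?_
    intro n ih f hfI hflm
    by_cases hf0 : f = 0
    · rw [hf0]; exact Ideal.zero_mem _
    obtain ⟨g, hgG, hdvd⟩ := hcover f hfI hf0
    have hg0 : g ≠ 0 := (hGI g hgG).2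
    rw [TermOrder.lt, TermOrder.lt, MvPolynomial.monomial_dvd_monomial] at hdvd
    have hle : σ.lm g ≤ σ.lm f := hdvd.1.resolve_left (lc_ne_zero σ hf0)
    obtain ⟨q, hq⟩ := hdvd.2
    have hq0 : q ≠ 0 := fun h0 => lc_ne_zero σ hf0 (by rw [hq, h0, mul_zero])
    have hmul := lm_lc_monomial_mul σ (e := σ.lm f - σ.lm g) hq0 hg0
    set h : MvPolynomial (Fin l) ℤ := MvPolynomial.monomial (σ.lm f - σ.lm g) q * g with hh
    have hlmh : σ.lm h = σ.lm f := by
      rw [hh, hmul.1, tsub_add_cancel_of_le hle]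
    have hlch : σ.lc h = σ.lc f := by
      rw [hh, hmul.2, hq, mul_comm]
    have hh0 : h ≠ 0 := fun h0 => lc_ne_zero σ hf0 (by rw [← hlch, h0]; rfl)
    have hhmem : h ∈ Ideal.span (G : Set (MvPolynomial (Fin l) ℤ)) :=
      Ideal.mul_mem_left _ _ (Ideal.subset_span hgG)
    by_cases hsub : f - h = 0
    · rw [sub_eq_zero] at hsub
      rw [hsub]; exact hhmem
    · have hlt := lm_sub_lt σ hf0 hh0 hlmh hlch hsub
      rw [hflm] at hlt
      have hfI' : f - h ∈ I := I.sub_mem hfI (hspan_le hhmem)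
      have hmem' := ih _ hlt (f - h) hfI' rfl
      have : f = (f - h) + h := by ring
      rw [this]
      exact Ideal.add_mem _ hmem' hhmem
  -- minimality
  have hminG : ∀ g ∈ G, ∀ g' ∈ G, g ≠ g' → ¬ σ.lt g ∣ σ.lt g' := by
    intro g hg g' hg' hne hdvd
    obtain ⟨b, hb, rfl⟩ := hGmem g hg
    obtain ⟨b', hb', rfl⟩ := hGmem g' hg'
    obtain ⟨hbM, hb2⟩ := hBspec b hb
    obtain ⟨hb'M, hb'2⟩ := hBspec b' hb'
    obtain ⟨_, _, hlm1, hlc1⟩ := hF'spec b.1 hbM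
    obtain ⟨_, _, hlm2, hlc2⟩ := hF'spec b'.1 hb'M
    rw [TermOrder.lt, TermOrder.lt, hlm1, hlc1, hlm2, hlc2,
      MvPolynomial.monomial_dvd_monomial] at hdvd
    have hle : b.1 ≤ b'.1 := hdvd.1.resolve_left (gen_ne_zero σ hb'M)
    have hdvd1 : gen σ I b.1 ∣ gen σ I b'.1 := hdvd.2
    have hdvd2 : gen σ I b'.1 ∣ gen σ I b.1 :=
      gen_dvd σ (lcIdeal_mono σ hle (gen_mem σ I b.1))
    have hOmeq : Om (gen σ I b.1) = Om (gen σ I b'.1) := by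
      have hnat : (gen σ I b.1).natAbs = (gen σ I b'.1).natAbs :=
        Nat.dvd_antisymm (Int.natAbs_dvd_natAbs.mpr hdvd1) (Int.natAbs_dvd_natAbs.mpr hdvd2)
      rw [Om, Om, hnat]
    have hble : b ≤ b' := by
      rw [← Prod.mk.eta (p := b), ← Prod.mk.eta (p := b'), Prod.mk_le_mk]
      exact ⟨hle, by rw [hb2, hb'2, hOmeq]⟩
    have hbeq : b = b' := hmin b' hb' b (hBS hb) hble
    exact hne (by rw [hbeq])
  refine ⟨G, fun g hg => (hGI g hg).2, ?_, hcover, hminG⟩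
  exact le_antisymm hspan_le (fun f hf => hspan _ f hf rfl)



/-- For a nonzero ideal `I` of `ℤ[x_1,…,x_l]`, only finitely many primes fail to be
`σ`-lucky for `I`. -/
theorem finitely_many_not_lucky_primes {l : ℕ} (σ : TermOrder l)
    (I : Ideal (MvPolynomial (Fin l) ℤ)) (hI : I ≠ ⊥) :
    {p : ℕ | p.Prime ∧ ¬ IsLuckyPrime σ I p}.Finite := by
  clear hI
  obtain ⟨G, hG⟩ := exists_msgb σ I
  refine Set.Finite.subset (Set.Finite.biUnion G.finite_toSet
    (fun g _ => Set.finite_Iic (σ.lc g).natAbs)) ?_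
  intro p hp
  obtain ⟨hprime, hnl⟩ := hp
  have hex : ∃ g ∈ G, (p : ℤ) ∣ σ.lc g := by
    by_contra hcon
    push_neg at hcon
    exact hnl ⟨G, hG, hcon⟩
  obtain ⟨g, hgG, hdvd⟩ := hex
  have hg0 : g ≠ 0 := hG.1 g hgG
  have hdvdn : p ∣ (σ.lc g).natAbs :=
    Int.natCast_dvd_natCast.mp ((Int.dvd_natAbs).mpr hdvd)
  have hpos : 0 < (σ.lc g).natAbs := Int.natAbs_pos.mpr (lc_ne_zero σ hg0)
  exact Set.mem_biUnion hgG (Nat.le_of_dvd hpos hdvdn)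

end HApaper
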